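/- There exists a 5×5 nilpotent complex matrix B whose numerical range Λ_1(B) is the closed unit disk {z ∈ ℂ : |z| ≤ 1} but for which Tr(B² Bᴴ) = 1 ≠ 0, so that the pencil L_B(t) is not isospectral (the characteristic polynomial of L_B(t) is not independent of t ∈ ℝ). One such matrix is the matrix with rows (0,2,0,0,0), (0,0,0,0,0), (0,0,0,1,1), (0,0,0,0,1), (0,0,0,0,0). -/

import Mathlib

open Matrix

/-- The Hermitian part `Re B = (B + Bᴴ)/2`. -/
noncomputable def reM {n : ℕ} (B : Matrix (Fin n) (Fin n) ℂ) : Matrix (Fin n) (Fin n) ℂ :=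
  (1 / 2 : ℂ) • (B + Bᴴ)

/-- The skew part `Im B = (B - Bᴴ)/(2i)`. -/
noncomputable def imM {n : ℕ} (B : Matrix (Fin n) (Fin n) ℂ) : Matrix (Fin n) (Fin n) ℂ :=
  (1 / (2 * Complex.I) : ℂ) • (B - Bᴴ)

/-- The pencil `L_B(t) = cos t ⬝ Re B + sin t ⬝ Im B = Re(e^{-it} B)`. -/
noncomputable def LB {n : ℕ} (B : Matrix (Fin n) (Fin n) ℂ) (t : ℝ) :
    Matrix (Fin n) (Fin n) ℂ :=
  (Real.cos t : ℂ) • reM B + (Real.sin t : ℂ) • imM B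

/-- The pencil `L_B(t)` is isospectral: its characteristic polynomial is
independent of `t`. -/
def Isospectral {n : ℕ} (B : Matrix (Fin n) (Fin n) ℂ) : Prop :=
  ∀ s t : ℝ, (LB B s).charpoly = (LB B t).charpoly

/-- The rank-`k` numerical range `Λ_k(B)`. -/
noncomputable def rankNumRange {n : ℕ} (B : Matrix (Fin n) (Fin n) ℂ) (k : ℕ) : Set ℂ :=
  {lam : ℂ | ∃ P : Matrix (Fin n) (Fin n) ℂ,
    Pᴴ = P ∧ P * P = P ∧ P.rank = k ∧ P * B * P = lam • P}


set_option maxRecDepth 8000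
set_option maxHeartbeats 1000000

noncomputable def Bm : Matrix (Fin 5) (Fin 5) ℂ :=
  !![0, 2, 0, 0, 0; 0, 0, 0, 0, 0; 0, 0, 0, 1, 1; 0, 0, 0, 0, 1; 0, 0, 0, 0, 0]



-- rank-zero implies zero
lemma rank_zero_imp {n : ℕ} (P : Matrix (Fin n) (Fin n) ℂ) (h : P.rank = 0) : P = 0 := by
  rw [Matrix.rank] at h
  have h2 : LinearMap.range P.mulVecLin = ⊥ := Submodule.finrank_eq_zero.mp h
  rw [LinearMap.range_eq_bot] at h2
  ext i j
  have := congrFun (congrArg (fun f => f.toFun) h2) (Pi.single j 1)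
  simpa [Matrix.mulVecLin, Matrix.mulVec_single] using congrFun this i

-- projection from unit vector
lemma proj_props {n : ℕ} (x : Fin n → ℂ) (hx : star x ⬝ᵥ x = 1)
    (B : Matrix (Fin n) (Fin n) ℂ) :
    (vecMulVec x (star x))ᴴ = vecMulVec x (star x) ∧
    vecMulVec x (star x) * vecMulVec x (star x) = vecMulVec x (star x) ∧
    (vecMulVec x (star x)).rank = 1 ∧
    vecMulVec x (star x) * B * vecMulVec x (star x)
      = (star x ⬝ᵥ B *ᵥ x) • vecMulVec x (star x) := by
  set P := vecMulVec x (star x) with hP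
  have hherm : Pᴴ = P := by
    ext i j
    simp [hP, Matrix.vecMulVec_apply, Matrix.conjTranspose_apply, mul_comm]
  have hidem : P * P = P := by
    ext i k
    simp only [hP, Matrix.mul_apply, Matrix.vecMulVec_apply]
    calc ∑ j, (x i * star x j) * (x j * star x k)
        = (x i * star x k) * ∑ j, star x j * x j := by
          rw [Finset.mul_sum]; exact Finset.sum_congr rfl fun j _ => by ring
      _ = x i * star x k := by
          simpa [dotProduct] using congrArg (fun z => (x i * star x k) * z) hx |>.trans (mul_one _)
  have htr : P.trace = 1 := by
    rw [Matrix.trace]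
    calc ∑ i, P.diag i = ∑ i, star x i * x i := Finset.sum_congr rfl fun i _ => by
          simp [hP, Matrix.vecMulVec_apply, Matrix.diag, mul_comm]
      _ = 1 := hx
  have hne : P ≠ 0 := by
    intro h0
    rw [h0] at htr
    simp [Matrix.trace] at htr
  have hrank : P.rank = 1 := by
    have hle : P.rank ≤ 1 := by
      rw [hP, Matrix.vecMulVec_eq Unit]
      exact le_trans (Matrix.rank_mul_le_left _ _) (by
        simpa using Matrix.rank_le_card_width (Matrix.replicateCol Unit x))
    have hge : P.rank ≠ 0 := fun h => hne (rank_zero_imp P h)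
    omega
  refine ⟨hherm, hidem, hrank, ?_⟩
  ext i k
  simp only [Matrix.mul_apply, hP, Matrix.vecMulVec_apply, Matrix.smul_apply, smul_eq_mul,
    dotProduct, Matrix.mulVec, Finset.sum_mul, Finset.mul_sum]
  rw [Finset.sum_comm]
  exact Finset.sum_congr rfl fun j _ => Finset.sum_congr rfl fun l _ => by ring

lemma key_bound (y : Fin 5 → ℂ) :
    ‖star y ⬝ᵥ Bm *ᵥ y‖ ≤ ∑ i, ‖y i‖ ^ 2 := by
  have hexp : star y ⬝ᵥ Bm *ᵥ y
      = 2 * (star (y 0) * y 1) + star (y 2) * y 3 + star (y 2) * y 4 + star (y 3) * y 4 := by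
    simp [Bm, dotProduct, Matrix.mulVec, Fin.sum_univ_five, Matrix.vecHead,
      Matrix.vecTail, Function.comp]
    ring
  have tri : ∀ w x u v : ℂ, ‖w + x + u + v‖
      ≤ ‖w‖ + ‖x‖ + ‖u‖ + ‖v‖ := by
    intro w x u v
    calc ‖w + x + u + v‖ ≤ ‖w + x + u‖ + ‖v‖ :=
          norm_add_le _ _
      _ ≤ (‖w + x‖ + ‖u‖) + ‖v‖ :=
          add_le_add_left (norm_add_le _ _) _
      _ ≤ ((‖w‖ + ‖x‖) + ‖u‖) + ‖v‖ :=
          by gcongr; exact norm_add_le _ _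
  rw [hexp, Fin.sum_univ_five]
  set a0 := ‖y 0‖; set a1 := ‖y 1‖; set a2 := ‖y 2‖
  set a3 := ‖y 3‖; set a4 := ‖y 4‖
  have h1 := tri (2 * (star (y 0) * y 1)) (star (y 2) * y 3) (star (y 2) * y 4)
    (star (y 3) * y 4)
  have e0 : ‖2 * (star (y 0) * y 1)‖ = 2 * (a0 * a1) := by
    simp [norm_mul, norm_star, a0, a1]
  have e1 : ‖star (y 2) * y 3‖ = a2 * a3 := by
    simp [norm_mul, norm_star, a2, a3]
  have e2 : ‖star (y 2) * y 4‖ = a2 * a4 := by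
    simp [norm_mul, norm_star, a2, a4]
  have e3 : ‖star (y 3) * y 4‖ = a3 * a4 := by
    simp [norm_mul, norm_star, a3, a4]
  rw [e0, e1, e2, e3] at h1
  refine le_trans h1 ?_
  have h0 : 0 ≤ a0 := norm_nonneg _
  have h2 : 0 ≤ a1 := norm_nonneg _
  have h3 : 0 ≤ a2 := norm_nonneg _
  have h4 : 0 ≤ a3 := norm_nonneg _
  have h5 : 0 ≤ a4 := norm_nonneg _
  nlinarith [sq_nonneg (a0 - a1), sq_nonneg (a2 - a3), sq_nonneg (a2 - a4), sq_nonneg (a3 - a4)]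


lemma range_eq : rankNumRange Bm 1 = {z : ℂ | ‖z‖ ≤ 1} := by
  ext lam
  constructor
  · rintro ⟨P, hH, hI, hrk, hPBP⟩
    have hne : P ≠ 0 := by
      intro h0
      rw [h0, Matrix.rank_zero] at hrk
      exact one_ne_zero hrk.symm
    have hij : ∃ i j, P i j ≠ 0 := by
      by_contra hc
      push_neg at hc
      exact hne (Matrix.ext fun i j => hc i j)
    obtain ⟨i0, j, hij⟩ := hij
    set y : Fin 5 → ℂ := fun i => P i j with hy
    have hPy : P *ᵥ y = y := by
      funext i
      have h := Matrix.ext_iff.2 hI i j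
      simpa [Matrix.mulVec, dotProduct, hy, Matrix.mul_apply] using h
    have hstar : ∀ i, star (y i) = P j i := fun i => by
      simpa [hy, Matrix.conjTranspose_apply, RCLike.star_def] using Matrix.ext_iff.2 hH j i
    have hyP : star y ᵥ* P = star y := by
      funext k
      have h := Matrix.ext_iff.2 hI j k
      simp only [Matrix.vecMul, dotProduct, Pi.star_apply, hstar]
      simpa [Matrix.mul_apply] using h
    -- main identity
    have hmain : star y ⬝ᵥ Bm *ᵥ y = lam * (star y ⬝ᵥ y) := by
      have h := congrArg (fun M => star y ⬝ᵥ M *ᵥ y) hPBP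
      rw [Matrix.dotProduct_mulVec, ← Matrix.vecMul_vecMul, ← Matrix.vecMul_vecMul, hyP,
        ← Matrix.dotProduct_mulVec (star y ᵥ* Bm), hPy, ← Matrix.dotProduct_mulVec,
        Matrix.smul_mulVec, hPy] at h
      simpa [dotProduct_smul, smul_eq_mul] using h
    set cr : ℝ := ∑ i, ‖y i‖ ^ 2 with hcr
    have hc : star y ⬝ᵥ y = (cr : ℂ) := by
      rw [hcr]
      push_cast
      simp only [dotProduct, Pi.star_apply]
      refine Finset.sum_congr rfl fun i _ => ?_
      rw [mul_comm, RCLike.star_def, Complex.mul_conj, Complex.normSq_eq_norm_sq]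
      push_cast
      ring
    have hcpos : 0 < cr := by
      rw [hcr]
      refine Finset.sum_pos' (fun i _ => sq_nonneg _) ⟨i0, Finset.mem_univ _, ?_⟩
      exact pow_pos (norm_pos_iff.mpr hij) 2
    have habs : ‖lam‖ * cr ≤ cr := by
      have := key_bound y
      rw [hmain, hc] at this
      simpa [norm_mul, Complex.norm_real, Real.norm_eq_abs, abs_of_pos hcpos] using this
    have : ‖lam‖ ≤ 1 := by
      by_contra hgt
      push_neg at hgt
      nlinarith
    exact this
  · intro hz
    simp only [Set.mem_setOf_eq] at hz
    set r : ℝ := ‖lam‖ with hr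
    have hr0 : 0 ≤ r := norm_nonneg _
    have h1r : 0 ≤ 1 - r ^ 2 := by nlinarith
    set s : ℝ := Real.sqrt (1 - r ^ 2) with hsdef
    have hs0 : 0 ≤ s := Real.sqrt_nonneg _
    have hs2 : s ^ 2 = 1 - r ^ 2 := Real.sq_sqrt h1r
    set a : ℝ := Real.sqrt ((1 + s) / 2) with hadef
    have ha2 : a ^ 2 = (1 + s) / 2 := Real.sq_sqrt (by linarith)
    have ha : 0 < a := Real.sqrt_pos.2 (by linarith)
    set b : ℂ := lam / (2 * (a : ℂ)) with hbdef
    have haC : (a : ℂ) ≠ 0 := by exact_mod_cast ha.ne'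
    set x : Fin 5 → ℂ := ![(a : ℂ), b, 0, 0, 0] with hx
    have hnormb : Complex.normSq b = r ^ 2 / (4 * a ^ 2) := by
      rw [hbdef, Complex.normSq_div]
      have : Complex.normSq (2 * (a : ℂ)) = 4 * a ^ 2 := by
        simp [Complex.normSq_mul, Complex.normSq_ofReal]
        ring
      rw [this, hr]
      simp [Complex.normSq_eq_norm_sq]
    have hnorm : star x ⬝ᵥ x = 1 := by
      have hre : a ^ 2 + r ^ 2 / (4 * a ^ 2) = 1 := by
        have ha2' : a ^ 2 ≠ 0 := by positivity
        field_simp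
        nlinarith [ha2, hs2]
      calc star x ⬝ᵥ x = ((a ^ 2 + Complex.normSq b : ℝ) : ℂ) := by
            simp [hx, dotProduct, Fin.sum_univ_five, RCLike.star_def,
              mul_comm, Complex.mul_conj]
            ring
        _ = 1 := by rw [hnormb, hre]; norm_num
    obtain ⟨hH, hI, hrk, hPBP⟩ := proj_props x hnorm Bm
    have hq : star x ⬝ᵥ Bm *ᵥ x = lam := by
      simp [hx, Bm, dotProduct, Matrix.mulVec, Fin.sum_univ_five, RCLike.star_def,
        Matrix.vecHead, Matrix.vecTail, Function.comp, Complex.conj_ofReal, hbdef]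
      field_simp
    exact ⟨vecMulVec x (star x), hH, hI, hrk, by rwa [hq] at hPBP⟩

/-- there is a nilpotent `5 × 5` matrix (an explicit one is given) whose
numerical range is the closed unit disk, yet `Tr(B² Bᴴ) = 1 ≠ 0` and the pencil `L_B(t)`
is not isospectral. -/
theorem exists_nilpotent_unit_disk_not_isospectral :
    ∃ B : Matrix (Fin 5) (Fin 5) ℂ,
      B = !![0, 2, 0, 0, 0;
             0, 0, 0, 0, 0;
             0, 0, 0, 1, 1;
             0, 0, 0, 0, 1;
             0, 0, 0, 0, 0] ∧
      B ^ 5 = 0 ∧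
      rankNumRange B 1 = {z : ℂ | ‖z‖ ≤ 1} ∧
      (B * B * Bᴴ).trace = 1 ∧ (1 : ℂ) ≠ 0 ∧
      ¬ Isospectral B := by
  refine ⟨Bm, rfl, ?_, range_eq, ?_, one_ne_zero, ?_⟩
  · ext i j
    fin_cases i <;> fin_cases j <;>
      norm_num [Bm, pow_succ, Matrix.mul_apply, Fin.sum_univ_five]
  · norm_num [Bm, Matrix.trace, Matrix.mul_apply, Fin.sum_univ_five,
      Matrix.conjTranspose_apply, Matrix.diag, Matrix.cons_val_two, Matrix.cons_val_three,
      Matrix.cons_val_four]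
  · intro h
    have h0 : LB Bm 0 = reM Bm := by
      simp [LB]
    have hpi : LB Bm Real.pi = -reM Bm := by
      simp [LB]
    have hdetBB : (Bm + Bmᴴ).det = -8 := by
      have hexp : Bm + Bmᴴ =
          !![0, 2, 0, 0, 0; 2, 0, 0, 0, 0; 0, 0, 0, 1, 1; 0, 0, 1, 0, 1; 0, 0, 1, 1, 0] := by
        ext i j
        fin_cases i <;> fin_cases j <;>
          norm_num [Bm, Matrix.conjTranspose_apply]
      rw [hexp]
      simp [Matrix.det_succ_row_zero, Fin.sum_univ_succ, Fin.succAbove]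
      norm_num
    have hdet : (reM Bm).det = -(1/4 : ℂ) := by
      rw [reM, Matrix.det_smul, hdetBB]
      norm_num
    have hcp := h 0 Real.pi
    rw [h0, hpi] at hcp
    have hd : (reM Bm).det = (-reM Bm).det := by
      rw [Matrix.det_eq_sign_charpoly_coeff, Matrix.det_eq_sign_charpoly_coeff, hcp]
    rw [Matrix.det_neg, hdet] at hd
    norm_num at hd
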